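/- Let c > 0 and let s ≥ 1 be an integer. There exists a constant C > 0, depending only on s and c, such that for every δ ∈ (0,1) and every measurable G : ℝ → ℂ with ∫_ℝ (1 + ξ²)^s |G(ξ)|² dξ < ∞, one has ∫_{−c/2}^{c/2} ( Σ_{m∈ℤ, m≠0} |G((k + c m)/δ)| )² dk ≤ C δ^{2s+1} ∫_ℝ (1 + ξ²)^s |G(ξ)|² dξ. That is, the aliased (nonzero Fourier copy) contributions of the rescaled profile are of size O(δ^{(2s+1)/2}) in L² of the fundamental cell, controlled by the weighted H^s-type norm of G. -/

import Mathlib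

noncomputable section

open Real MeasureTheory
open scoped ENNReal NNReal

private lemma tsum_cauchy_schwarz {ι : Type*} {a b : ι → ℝ} (ha : ∀ i, 0 ≤ a i)
    (hb : ∀ i, 0 ≤ b i) (hA : Summable (fun i => a i ^ 2)) (hB : Summable (fun i => b i ^ 2)) :
    (∑' i, a i * b i) ^ 2 ≤ (∑' i, a i ^ 2) * (∑' i, b i ^ 2) := by
  have hab : Summable (fun i => a i * b i) := by
    refine Summable.of_nonneg_of_le (fun i => mul_nonneg (ha i) (hb i)) (fun i => ?_)
      ((hA.add hB).div_const 2)
    have h := sq_nonneg (a i - b i)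
    nlinarith [h]
  have hPn : 0 ≤ (∑' i, a i ^ 2) := tsum_nonneg fun i => sq_nonneg _
  have hQn : 0 ≤ (∑' i, b i ^ 2) := tsum_nonneg fun i => sq_nonneg _
  have key : ∑' i, a i * b i ≤ Real.sqrt ((∑' i, a i ^ 2) * (∑' i, b i ^ 2)) := by
    refine hab.tsum_le_of_sum_le fun F => ?_
    have h1 := Finset.sum_mul_sq_le_sq_mul_sq F a b
    have h2 : (∑ i ∈ F, a i * b i) ^ 2 ≤ (∑' i, a i ^ 2) * (∑' i, b i ^ 2) :=
      h1.trans (mul_le_mul (hA.sum_le_tsum F (fun i _ => sq_nonneg _))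
        (hB.sum_le_tsum F (fun i _ => sq_nonneg _))
        (Finset.sum_nonneg fun i _ => sq_nonneg _) hPn)
    calc ∑ i ∈ F, a i * b i ≤ |∑ i ∈ F, a i * b i| := le_abs_self _
      _ = Real.sqrt ((∑ i ∈ F, a i * b i) ^ 2) := (Real.sqrt_sq_eq_abs _).symm
      _ ≤ _ := Real.sqrt_le_sqrt h2
  have hS : 0 ≤ ∑' i, a i * b i := tsum_nonneg fun i => mul_nonneg (ha i) (hb i)
  calc (∑' i, a i * b i) ^ 2
      ≤ Real.sqrt ((∑' i, a i ^ 2) * (∑' i, b i ^ 2)) ^ 2 := by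
        exact pow_le_pow_left₀ hS key 2
    _ = _ := Real.sq_sqrt (mul_nonneg hPn hQn)

private lemma tsum_eq_toReal_tsum_ofReal {ι : Type*} {f : ι → ℝ} (hf : ∀ i, 0 ≤ f i) :
    ∑' i, f i = (∑' i, ENNReal.ofReal (f i)).toReal := by
  by_cases h : Summable f
  · rw [← ENNReal.ofReal_tsum_of_nonneg hf h, ENNReal.toReal_ofReal (tsum_nonneg hf)]
  · rw [tsum_eq_zero_of_not_summable h]
    have htop : ∑' i, ENNReal.ofReal (f i) = ⊤ := by
      by_contra hne
      exact h ((ENNReal.summable_toReal hne).congr fun i => ENNReal.toReal_ofReal (hf i))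
    rw [htop]
    simp

private lemma tsum_ofReal_eq_top_of_not_summable {ι : Type*} {f : ι → ℝ} (hf : ∀ i, 0 ≤ f i)
    (h : ¬ Summable f) : ∑' i, ENNReal.ofReal (f i) = ⊤ := by
  by_contra hne
  exact h ((ENNReal.summable_toReal hne).congr fun i => ENNReal.toReal_ofReal (hf i))

private lemma lintegral_cell_tsum_le (c : ℝ) (hc : 0 < c) (f : ℝ → ℝ≥0∞) (hf : Measurable f) :
    (∫⁻ k in Set.Icc (-(c / 2)) (c / 2),
        ∑' m : {m : ℤ // m ≠ 0}, f (k + c * ((m : ℤ) : ℝ)))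
      ≤ ∫⁻ x, f x := by
  have hIcc : (∫⁻ k in Set.Icc (-(c / 2)) (c / 2),
      ∑' m : {m : ℤ // m ≠ 0}, f (k + c * ((m : ℤ) : ℝ)))
      = ∫⁻ k in Set.Ioc (-(c / 2)) (c / 2),
      ∑' m : {m : ℤ // m ≠ 0}, f (k + c * ((m : ℤ) : ℝ)) :=
    (setLIntegral_congr Ioc_ae_eq_Icc).symm
  rw [hIcc, lintegral_tsum (f := fun (m : {m : ℤ // m ≠ 0}) (k : ℝ) => f (k + c * ((m : ℤ) : ℝ)))
    (fun m => (hf.comp (measurable_add_const _)).aemeasurable)]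
  have hterm : ∀ m : {m : ℤ // m ≠ 0},
      (∫⁻ k in Set.Ioc (-(c / 2)) (c / 2), f (k + c * ((m : ℤ) : ℝ)))
        = ∫⁻ x in Set.Ioc (c * ((m : ℤ) : ℝ) - c / 2) (c * ((m : ℤ) : ℝ) + c / 2), f x := by
    intro m
    set a : ℝ := c * ((m : ℤ) : ℝ) with ha
    have hmap : Measure.map (fun x : ℝ => x + a) volume = volume :=
      map_add_right_eq_self volume a
    have hmeas : MeasurableSet (Set.Ioc (a - c / 2) (a + c / 2)) := measurableSet_Ioc
    have hpre : (fun x : ℝ => x + a) ⁻¹' Set.Ioc (a - c / 2) (a + c / 2)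
        = Set.Ioc (-(c / 2)) (c / 2) := by
      ext x
      simp only [Set.mem_preimage, Set.mem_Ioc]
      constructor <;> intro hx <;> constructor <;> linarith [hx.1, hx.2]
    calc ∫⁻ k in Set.Ioc (-(c / 2)) (c / 2), f (k + a)
        = ∫⁻ x, f x ∂((volume.restrict ((fun x : ℝ => x + a) ⁻¹'
            Set.Ioc (a - c / 2) (a + c / 2))).map (fun x : ℝ => x + a)) := by
          rw [lintegral_map hf (measurable_add_const a), hpre]
      _ = ∫⁻ x in Set.Ioc (a - c / 2) (a + c / 2), f x
            ∂(Measure.map (fun x : ℝ => x + a) volume) := by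
          rw [Measure.restrict_map (measurable_add_const a) hmeas]
      _ = ∫⁻ x in Set.Ioc (a - c / 2) (a + c / 2), f x := by rw [hmap]
  rw [tsum_congr hterm]
  have hdisj : Pairwise (Function.onFun Disjoint fun m : {m : ℤ // m ≠ 0} =>
      Set.Ioc (c * ((m : ℤ) : ℝ) - c / 2) (c * ((m : ℤ) : ℝ) + c / 2)) := by
    intro m n hmn
    have hval : (m : ℤ) ≠ (n : ℤ) := fun h => hmn (Subtype.ext h)
    rcases lt_or_gt_of_ne hval with h | h
    · refine Set.Ioc_disjoint_Ioc.mpr ?_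
      have h1 : ((m : ℤ) : ℝ) + 1 ≤ ((n : ℤ) : ℝ) := by exact_mod_cast Int.add_one_le_iff.mpr h
      have : c * ((m : ℤ) : ℝ) + c / 2 ≤ c * ((n : ℤ) : ℝ) - c / 2 := by nlinarith
      exact le_trans (min_le_left _ _) (le_trans this (le_max_right _ _))
    · refine Set.Ioc_disjoint_Ioc.mpr ?_
      have h1 : ((n : ℤ) : ℝ) + 1 ≤ ((m : ℤ) : ℝ) := by exact_mod_cast Int.add_one_le_iff.mpr h
      have : c * ((n : ℤ) : ℝ) + c / 2 ≤ c * ((m : ℤ) : ℝ) - c / 2 := by nlinarith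
      exact le_trans (min_le_right _ _) (le_trans this (le_max_left _ _))
  rw [← lintegral_iUnion (fun m => measurableSet_Ioc) hdisj]
  exact lintegral_mono' Measure.restrict_le_self le_rfl
set_option maxHeartbeats 2000000 in
theorem aliasing_tail_bound (c : ℝ) (hc : 0 < c) (s : ℕ) (hs : 1 ≤ s) :
    ∃ C : ℝ, 0 < C ∧
      ∀ δ : ℝ, δ ∈ Set.Ioo (0 : ℝ) 1 →
      ∀ G : ℝ → ℂ, Measurable G →
        Integrable (fun ξ : ℝ => (1 + ξ ^ 2) ^ s * ‖G ξ‖ ^ 2) →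
        (∫ k in Set.Icc (-(c / 2)) (c / 2),
            (∑' m : {m : ℤ // m ≠ 0}, ‖G ((k + c * ((m : ℤ) : ℝ)) / δ)‖) ^ 2)
          ≤ C * δ ^ (2 * s + 1) *
              ∫ ξ : ℝ, (1 + ξ ^ 2) ^ s * ‖G ξ‖ ^ 2 := by
  have hBsum : Summable (fun m : {m : ℤ // m ≠ 0} => 1 / ((m : ℤ) : ℝ) ^ 2) := by
    have h := Real.summable_one_div_int_pow (p := 2) |>.mpr one_lt_two
    exact h.subtype _
  set B : ℝ := ∑' m : {m : ℤ // m ≠ 0}, 1 / ((m : ℤ) : ℝ) ^ 2 with hBdef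
  have hB0 : 0 ≤ B := tsum_nonneg fun m => by positivity
  have hB1 : (0:ℝ) < B + 1 := by linarith
  refine ⟨4 ^ s / c ^ (2 * s) * (B + 1),
    mul_pos (div_pos (pow_pos (by norm_num) s) (pow_pos hc _)) hB1, ?_⟩
  intro δ hδ G hG hInt
  obtain ⟨hδ0, hδ1⟩ := hδ
  set F : ℝ → ℝ := fun ξ => (1 + ξ ^ 2) ^ s * ‖G ξ‖ ^ 2 with hFdef
  have hF0 : ∀ ξ, 0 ≤ F ξ := fun ξ => mul_nonneg (by positivity) (sq_nonneg _)
  have hFmeas : Measurable F :=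
    ((measurable_const.add (measurable_id.pow_const 2)).pow_const s).mul
      (hG.norm.pow_const 2)
  set gE : ℝ → ℝ≥0∞ := fun ξ => ENNReal.ofReal (F ξ) with hgEdef
  have hgEmeas : Measurable gE := ENNReal.measurable_ofReal.comp hFmeas
  have hI0 : 0 ≤ ∫ ξ, F ξ := integral_nonneg hF0
  have haff : ∀ m : {m : ℤ // m ≠ 0}, Measurable fun k : ℝ => (k + c * ((m : ℤ) : ℝ)) / δ :=
    fun m => (measurable_id.add_const _).div_const δ
  set SE : ℝ → ℝ≥0∞ := fun k => ∑' m : {m : ℤ // m ≠ 0},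
    ENNReal.ofReal (‖G ((k + c * ((m : ℤ) : ℝ)) / δ)‖) with hSEdef
  have hSEmeas : Measurable SE :=
    Measurable.ennreal_tsum fun m =>
      ENNReal.measurable_ofReal.comp (hG.comp (haff m)).norm
  have hSrepr : ∀ k : ℝ, (∑' m : {m : ℤ // m ≠ 0},
      ‖G ((k + c * ((m : ℤ) : ℝ)) / δ)‖) = (SE k).toReal :=
    fun k => tsum_eq_toReal_tsum_ofReal (fun m => norm_nonneg _)
  have hA0 : (0:ℝ) < 4 ^ s / c ^ (2 * s) * (B + 1) * δ ^ (2 * s) :=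
    mul_pos (mul_pos (div_pos (pow_pos (by norm_num) s) (pow_pos hc _)) hB1)
      (pow_pos hδ0 _)
  -- the pointwise Cauchy-Schwarz bound on the cell
  have hkey : ∀ k ∈ Set.Icc (-(c / 2)) (c / 2),
      ENNReal.ofReal ((SE k).toReal ^ 2)
        ≤ ENNReal.ofReal (4 ^ s / c ^ (2 * s) * (B + 1) * δ ^ (2 * s)) *
            ∑' m : {m : ℤ // m ≠ 0}, gE ((k + c * ((m : ℤ) : ℝ)) / δ) := by
    intro k hk
    obtain ⟨hk1, hk2⟩ := hk
    set v : {m : ℤ // m ≠ 0} → ℝ := fun m => (k + c * ((m : ℤ) : ℝ)) / δ with hv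
    set w : {m : ℤ // m ≠ 0} → ℝ := fun m => (1 + v m ^ 2) ^ s with hw
    have hw0 : ∀ m, 0 < w m := fun m => by
      rw [hw]; positivity
    have hm1 : ∀ m : {m : ℤ // m ≠ 0}, (1:ℝ) ≤ ((m : ℤ) : ℝ) ^ 2 := by
      intro m
      have h1 : (1:ℤ) ≤ (m : ℤ) ^ 2 := by
        have h2 : (1:ℤ) ≤ |(m : ℤ)| := Int.one_le_abs (by exact_mod_cast m.2)
        nlinarith [sq_abs (m : ℤ)]
      exact_mod_cast h1
    have hquad : ∀ m : {m : ℤ // m ≠ 0},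
        c ^ 2 * ((m : ℤ) : ℝ) ^ 2 / 4 ≤ (k + c * ((m : ℤ) : ℝ)) ^ 2 := by
      intro m
      set t : ℝ := ((m : ℤ) : ℝ) with htdef
      have ht : (1:ℝ) ≤ t ^ 2 := hm1 m
      rcases le_or_gt 0 t with h | h
      · have ht1 : (1:ℝ) ≤ t := by nlinarith
        have hct : c ≤ c * t := by nlinarith
        have f1 : 0 ≤ k + c * t / 2 := by linarith
        have f2 : 0 ≤ k + 3 * (c * t) / 2 := by linarith
        nlinarith [mul_nonneg f1 f2]
      · have ht1 : t ≤ -1 := by nlinarith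
        have hct : c * t ≤ -c := by nlinarith
        have f1 : k + c * t / 2 ≤ 0 := by linarith
        have f2 : k + 3 * (c * t) / 2 ≤ 0 := by linarith
        nlinarith [mul_nonneg (neg_nonneg.mpr f1) (neg_nonneg.mpr f2)]
    have hwlb : ∀ m : {m : ℤ // m ≠ 0},
        (c ^ 2 * ((m : ℤ) : ℝ) ^ 2 / (4 * δ ^ 2)) ^ s ≤ w m := by
      intro m
      have hδ2 : (0:ℝ) < δ ^ 2 := by positivity
      have h1 : c ^ 2 * ((m : ℤ) : ℝ) ^ 2 / (4 * δ ^ 2) ≤ 1 + v m ^ 2 := by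
        have h2 := hquad m
        have h3 : v m ^ 2 = (k + c * ((m : ℤ) : ℝ)) ^ 2 / δ ^ 2 := by
          rw [hv]; exact div_pow _ _ _
        rw [h3]
        have h4 : c ^ 2 * ((m : ℤ) : ℝ) ^ 2 / (4 * δ ^ 2)
            = (c ^ 2 * ((m : ℤ) : ℝ) ^ 2 / 4) / δ ^ 2 := by ring
        rw [h4]
        have h5 : (c ^ 2 * ((m : ℤ) : ℝ) ^ 2 / 4) / δ ^ 2
            ≤ (k + c * ((m : ℤ) : ℝ)) ^ 2 / δ ^ 2 := by gcongr
        have h6 : (0:ℝ) ≤ (k + c * ((m : ℤ) : ℝ)) ^ 2 / δ ^ 2 := by positivity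
        linarith
      rw [hw]
      exact pow_le_pow_left₀ (by positivity) h1 s
    set a : {m : ℤ // m ≠ 0} → ℝ := fun m => 1 / Real.sqrt (w m) with hadef
    set b : {m : ℤ // m ≠ 0} → ℝ := fun m => Real.sqrt (w m) * ‖G (v m)‖ with hbdef
    have ha0 : ∀ m, 0 ≤ a m := fun m => by rw [hadef]; positivity
    have hb0 : ∀ m, 0 ≤ b m := fun m => by
      rw [hbdef]
      exact mul_nonneg (Real.sqrt_nonneg _) (norm_nonneg _)
    have hab : ∀ m, a m * b m = ‖G (v m)‖ := by
      intro m
      have hsq : Real.sqrt (w m) ≠ 0 := ne_of_gt (Real.sqrt_pos.mpr (hw0 m))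
      rw [hadef, hbdef]
      simp only [one_div]
      exact inv_mul_cancel_left₀ hsq _
    have ha2 : ∀ m, a m ^ 2 = 1 / w m := by
      intro m
      rw [hadef, div_pow, one_pow, Real.sq_sqrt (hw0 m).le]
    have hb2 : ∀ m, b m ^ 2 = F (v m) := by
      intro m
      rw [hbdef, mul_pow, Real.sq_sqrt (hw0 m).le, hw, hFdef]
    have ha2le : ∀ m, a m ^ 2 ≤ 4 ^ s * δ ^ (2 * s) / c ^ (2 * s) * (1 / ((m : ℤ) : ℝ) ^ 2) := by
      intro m
      rw [ha2 m]
      have ht2 : (0:ℝ) < ((m : ℤ) : ℝ) ^ 2 := lt_of_lt_of_le one_pos (hm1 m)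
      have hq0 : (0:ℝ) < (c ^ 2 * ((m : ℤ) : ℝ) ^ 2 / (4 * δ ^ 2)) ^ s := by positivity
      have h2 : 1 / w m ≤ 1 / (c ^ 2 * ((m : ℤ) : ℝ) ^ 2 / (4 * δ ^ 2)) ^ s :=
        one_div_le_one_div_of_le hq0 (hwlb m)
      refine h2.trans ?_
      have hstep : (1 / ((m : ℤ) : ℝ) ^ 2) ^ s ≤ 1 / ((m : ℤ) : ℝ) ^ 2 := by
        refine pow_le_of_le_one (by positivity) ?_ (by omega)
        rw [div_le_one ht2]
        exact hm1 m
      have hbase : (c ^ 2 * ((m : ℤ) : ℝ) ^ 2 / (4 * δ ^ 2))⁻¹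
          = 4 * δ ^ 2 / c ^ 2 * (1 / ((m : ℤ) : ℝ) ^ 2) := by
        rw [inv_div, div_mul_div_comm, mul_one]
      have heq : 1 / (c ^ 2 * ((m : ℤ) : ℝ) ^ 2 / (4 * δ ^ 2)) ^ s
          = (4 * δ ^ 2 / c ^ 2) ^ s * (1 / ((m : ℤ) : ℝ) ^ 2) ^ s := by
        rw [one_div, ← inv_pow, hbase, mul_pow]
      rw [heq]
      have h3 : (4 * δ ^ 2 / c ^ 2) ^ s * (1 / ((m : ℤ) : ℝ) ^ 2) ^ s
          ≤ (4 * δ ^ 2 / c ^ 2) ^ s * (1 / ((m : ℤ) : ℝ) ^ 2) :=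
        mul_le_mul_of_nonneg_left hstep (by positivity)
      refine h3.trans (le_of_eq ?_)
      rw [div_pow, mul_pow, ← pow_mul, ← pow_mul]
    have hAsum : Summable (fun m => a m ^ 2) :=
      Summable.of_nonneg_of_le (fun m => sq_nonneg _) ha2le (hBsum.mul_left _)
    have htsumA : (∑' m, a m ^ 2) ≤ 4 ^ s * δ ^ (2 * s) / c ^ (2 * s) * B := by
      have h := Summable.tsum_le_tsum ha2le hAsum (hBsum.mul_left _)
      rwa [tsum_mul_left] at h
    by_cases hbS : Summable (fun m => b m ^ 2)
    · have hcs := tsum_cauchy_schwarz ha0 hb0 hAsum hbS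
      have hSab : (SE k).toReal = ∑' m, a m * b m := by
        rw [← hSrepr k]
        exact tsum_congr fun m => by rw [hab m, hv]
      have htb0 : 0 ≤ ∑' m, b m ^ 2 := tsum_nonneg fun m => sq_nonneg _
      have hbound : (SE k).toReal ^ 2
          ≤ (4 ^ s / c ^ (2 * s) * (B + 1) * δ ^ (2 * s)) * ∑' m, b m ^ 2 := by
        rw [hSab]
        refine hcs.trans ?_
        have h1 : (∑' m, a m ^ 2) * (∑' m, b m ^ 2)
            ≤ (4 ^ s * δ ^ (2 * s) / c ^ (2 * s) * B) * ∑' m, b m ^ 2 :=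
          mul_le_mul_of_nonneg_right htsumA htb0
        refine h1.trans ?_
        refine mul_le_mul_of_nonneg_right ?_ htb0
        have h2 : (4:ℝ) ^ s * δ ^ (2 * s) / c ^ (2 * s) * B
            ≤ 4 ^ s * δ ^ (2 * s) / c ^ (2 * s) * (B + 1) :=
          mul_le_mul_of_nonneg_left (by linarith) (by positivity)
        refine h2.trans (le_of_eq (by ring))
      calc ENNReal.ofReal ((SE k).toReal ^ 2)
          ≤ ENNReal.ofReal ((4 ^ s / c ^ (2 * s) * (B + 1) * δ ^ (2 * s)) * ∑' m, b m ^ 2) :=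
            ENNReal.ofReal_le_ofReal hbound
        _ = ENNReal.ofReal (4 ^ s / c ^ (2 * s) * (B + 1) * δ ^ (2 * s)) *
              ENNReal.ofReal (∑' m, b m ^ 2) := ENNReal.ofReal_mul hA0.le
        _ = _ := by
            rw [ENNReal.ofReal_tsum_of_nonneg (fun m => sq_nonneg _) hbS]
            exact congrArg _ (tsum_congr fun m => by rw [hb2 m, hgEdef, hv])
    · have htop : (∑' m : {m : ℤ // m ≠ 0}, gE ((k + c * ((m : ℤ) : ℝ)) / δ)) = ⊤ := by
        have h1 : (∑' m, ENNReal.ofReal (b m ^ 2)) = ⊤ :=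
          tsum_ofReal_eq_top_of_not_summable (fun m => sq_nonneg _) hbS
        rw [← h1]
        exact tsum_congr fun m => by rw [hb2 m, hgEdef, hv]
      rw [htop, ENNReal.mul_top]
      · exact le_top
      · simp only [ne_eq, ENNReal.ofReal_eq_zero, not_le]
        exact hA0
  -- main estimate at the level of lower integrals
  have hmain : (∫⁻ k in Set.Icc (-(c / 2)) (c / 2), ENNReal.ofReal ((SE k).toReal ^ 2))
      ≤ ENNReal.ofReal (4 ^ s / c ^ (2 * s) * (B + 1) * δ ^ (2 * s)) *
          (ENNReal.ofReal δ * ENNReal.ofReal (∫ ξ, F ξ)) := by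
    have hTmeas : Measurable fun k : ℝ =>
        ∑' m : {m : ℤ // m ≠ 0}, gE ((k + c * ((m : ℤ) : ℝ)) / δ) :=
      Measurable.ennreal_tsum fun m => hgEmeas.comp (haff m)
    have h1 : (∫⁻ k in Set.Icc (-(c / 2)) (c / 2), ENNReal.ofReal ((SE k).toReal ^ 2))
        ≤ ∫⁻ k in Set.Icc (-(c / 2)) (c / 2),
            ENNReal.ofReal (4 ^ s / c ^ (2 * s) * (B + 1) * δ ^ (2 * s)) *
              ∑' m : {m : ℤ // m ≠ 0}, gE ((k + c * ((m : ℤ) : ℝ)) / δ) :=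
      setLIntegral_mono' measurableSet_Icc hkey
    have h2 : (∫⁻ k in Set.Icc (-(c / 2)) (c / 2),
          ENNReal.ofReal (4 ^ s / c ^ (2 * s) * (B + 1) * δ ^ (2 * s)) *
            ∑' m : {m : ℤ // m ≠ 0}, gE ((k + c * ((m : ℤ) : ℝ)) / δ))
        = ENNReal.ofReal (4 ^ s / c ^ (2 * s) * (B + 1) * δ ^ (2 * s)) *
            ∫⁻ k in Set.Icc (-(c / 2)) (c / 2),
              ∑' m : {m : ℤ // m ≠ 0}, gE ((k + c * ((m : ℤ) : ℝ)) / δ) :=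
      lintegral_const_mul _ hTmeas
    have h3 : (∫⁻ k in Set.Icc (-(c / 2)) (c / 2),
          ∑' m : {m : ℤ // m ≠ 0}, gE ((k + c * ((m : ℤ) : ℝ)) / δ))
        ≤ ∫⁻ x, gE (x / δ) :=
      lintegral_cell_tsum_le c hc (fun x => gE (x / δ)) (hgEmeas.comp (measurable_id.div_const δ))
    have hδne : δ ≠ 0 := ne_of_gt hδ0
    have h4 : (∫⁻ x, gE (x / δ)) = ENNReal.ofReal δ * ∫⁻ x, gE x := by
      have hmap := Real.map_volume_mul_left (a := δ⁻¹) (inv_ne_zero hδne)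
      calc (∫⁻ x, gE (x / δ)) = ∫⁻ x, gE (δ⁻¹ * x) := by
            refine lintegral_congr fun x => ?_
            rw [div_eq_mul_inv, mul_comm]
        _ = ∫⁻ y, gE y ∂(Measure.map (fun x : ℝ => δ⁻¹ * x) volume) :=
            (lintegral_map hgEmeas (measurable_const_mul _)).symm
        _ = ∫⁻ y, gE y ∂(ENNReal.ofReal |δ⁻¹⁻¹| • volume) := by rw [hmap]
        _ = ENNReal.ofReal δ * ∫⁻ y, gE y := by
            rw [lintegral_smul_measure, inv_inv, abs_of_pos hδ0, smul_eq_mul]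
    have h5 : (∫⁻ x, gE x) = ENNReal.ofReal (∫ ξ, F ξ) :=
      (ofReal_integral_eq_lintegral_ofReal hInt (ae_of_all _ hF0)).symm
    calc (∫⁻ k in Set.Icc (-(c / 2)) (c / 2), ENNReal.ofReal ((SE k).toReal ^ 2))
        ≤ _ := h1
      _ = _ := h2
      _ ≤ ENNReal.ofReal (4 ^ s / c ^ (2 * s) * (B + 1) * δ ^ (2 * s)) * ∫⁻ x, gE (x / δ) :=
          mul_le_mul_right h3 _
      _ = _ := by rw [h4, h5]
  -- convert back to Bochner integrals
  have hL : (∫ k in Set.Icc (-(c / 2)) (c / 2),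
        (∑' m : {m : ℤ // m ≠ 0}, ‖G ((k + c * ((m : ℤ) : ℝ)) / δ)‖) ^ 2)
      = (∫⁻ k in Set.Icc (-(c / 2)) (c / 2), ENNReal.ofReal ((SE k).toReal ^ 2)).toReal := by
    have heq : (fun k : ℝ =>
        (∑' m : {m : ℤ // m ≠ 0}, ‖G ((k + c * ((m : ℤ) : ℝ)) / δ)‖) ^ 2)
        = fun k => (SE k).toReal ^ 2 := funext fun k => by rw [hSrepr k]
    rw [heq]
    exact integral_eq_lintegral_of_nonneg_ae (ae_of_all _ fun k => sq_nonneg _)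
      ((hSEmeas.ennreal_toReal.pow_const 2).aestronglyMeasurable)
  rw [hL]
  have hRne : ENNReal.ofReal (4 ^ s / c ^ (2 * s) * (B + 1) * δ ^ (2 * s)) *
      (ENNReal.ofReal δ * ENNReal.ofReal (∫ ξ, F ξ)) ≠ ⊤ :=
    ENNReal.mul_ne_top ENNReal.ofReal_ne_top
      (ENNReal.mul_ne_top ENNReal.ofReal_ne_top ENNReal.ofReal_ne_top)
  refine le_trans (ENNReal.toReal_mono hRne hmain) (le_of_eq ?_)
  rw [ENNReal.toReal_mul, ENNReal.toReal_mul, ENNReal.toReal_ofReal hA0.le,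
    ENNReal.toReal_ofReal hδ0.le, ENNReal.toReal_ofReal hI0]
  rw [pow_succ]
  ring
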